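/- Let P be a finitary unique-cover-modular poset, let w : P → ℤ take only positive values, and let r be an integer such that (w, r) satisfies the ideal-differential condition on P. Then for every p ∈ P, the set Sₚ is an antichain: any two distinct elements of Sₚ are incomparable. -/

import Mathlib

open scoped BigOperators

/-- A poset is finitary if every principal lower set is finite. -/
def Finitary (P : Type*) [PartialOrder P] : Prop :=
  ∀ x : P, {y : P | y ≤ x}.Finite

/-- A poset is unique-cover-modular if any two distinct elements covering a common
element, or covered by a common element, are covered by a unique common element and
cover a unique common element. -/
def UCM (P : Type*) [PartialOrder P] : Prop :=
  ∀ x y : P, x ≠ y →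
    ((∃ a, a ⋖ x ∧ a ⋖ y) ∨ (∃ b, x ⋖ b ∧ y ⋖ b)) →
    (∃! a, a ⋖ x ∧ a ⋖ y) ∧ (∃! b, x ⋖ b ∧ y ⋖ b)

/-- The set of maximal elements of a subset `I` of a poset. -/
def maxIn {P : Type*} [PartialOrder P] (I : Set P) : Set P :=
  {a | a ∈ I ∧ ∀ b ∈ I, a ≤ b → b = a}

/-- The set of minimal elements of a subset `I` of a poset. -/
def minIn {P : Type*} [PartialOrder P] (I : Set P) : Set P :=
  {a | a ∈ I ∧ ∀ b ∈ I, b ≤ a → b = a}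

/-- `(w, r)` satisfies the ideal-differential condition on `P`: for every finite lower set
`I`, the set of minimal elements of the complement is finite and
`(∑_{a maximal in I} w a) + r = ∑_{b minimal in P ∖ I} w b`. -/
def IdealDiff {P : Type*} [PartialOrder P] (w : P → ℤ) (r : ℤ) : Prop :=
  ∀ I : Set P, I.Finite → IsLowerSet I →
    (minIn Iᶜ).Finite ∧ ((∑ᶠ a ∈ maxIn I, w a) + r = ∑ᶠ b ∈ minIn Iᶜ, w b)

/-- `Sset p` is the set of siblings of `p`: elements `x ≠ p` with `a < x < b` for some
`a ⋖ p` and `p ⋖ b`. -/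
def Sset {P : Type*} [PartialOrder P] (p : P) : Set P :=
  {x | x ≠ p ∧ ∃ a b : P, a ⋖ p ∧ p ⋖ b ∧ a < x ∧ x < b}

section Aux
variable {P : Type*} [PartialOrder P]


lemma Finitary.wf (hfin : Finitary P) : WellFounded ((· < ·) : P → P → Prop) := by
  have hm : ∀ y x : P, y < x → (hfin y).toFinset.card < (hfin x).toFinset.card := by
    intro y x hyx
    apply Finset.card_lt_card
    rw [Finset.ssubset_iff_of_subset]
    · exact ⟨x, by simp [Set.Finite.mem_toFinset], by
        simp only [Set.Finite.mem_toFinset, Set.mem_setOf_eq]; exact not_le_of_gt hyx⟩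
    · intro z hz
      simp only [Set.Finite.mem_toFinset, Set.mem_setOf_eq] at *
      exact hz.trans hyx.le
  exact Subrelation.wf (fun {a b} h => hm a b h) (InvImage.wf _ Nat.lt_wfRel.wf)

lemma lowFin (hfin : Finitary P) (x : P) : {y : P | y < x}.Finite :=
  (hfin x).subset (fun y hy => le_of_lt hy)

noncomputable def lowF (hfin : Finitary P) (x : P) : Finset P := (lowFin hfin x).toFinset

lemma mem_lowF {hfin : Finitary P} {x y : P} : y ∈ lowF hfin x ↔ y < x :=
  Set.Finite.mem_toFinset _

noncomputable def rk (hfin : Finitary P) : P → ℕ :=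
  hfin.wf.fix (fun x ih => (lowF hfin x).attach.sup fun y => ih y.1 (mem_lowF.1 y.2) + 1)

lemma rk_def (hfin : Finitary P) (x : P) :
    rk hfin x = (lowF hfin x).attach.sup (fun y => rk hfin y.1 + 1) := by
  rw [rk, WellFounded.fix_eq]

lemma rk_lt (hfin : Finitary P) {y x : P} (h : y < x) : rk hfin y < rk hfin x := by
  rw [rk_def hfin x]
  have hy : (⟨y, mem_lowF.2 h⟩ : {z // z ∈ lowF hfin x}) ∈ (lowF hfin x).attach :=
    Finset.mem_attach _ _
  exact Nat.lt_of_lt_of_le (Nat.lt_succ_self _)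
    (Finset.le_sup (f := fun z : {z // z ∈ lowF hfin x} => rk hfin z.1 + 1) hy)

lemma rk_attained (hfin : Finitary P) {x a : P} (ha : a < x) :
    ∃ y, y < x ∧ rk hfin x = rk hfin y + 1 := by
  have hne : (lowF hfin x).attach.Nonempty := ⟨⟨a, mem_lowF.2 ha⟩, Finset.mem_attach _ _⟩
  obtain ⟨y, hy, hsup⟩ := Finset.exists_mem_eq_sup _ hne (fun z : {z // z ∈ lowF hfin x} => rk hfin z.1 + 1)
  exact ⟨y.1, mem_lowF.1 y.2, by rw [rk_def]; exact hsup⟩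

lemma exists_covby (hfin : Finitary P) {y x : P} (h : y < x) : ∃ z, y ≤ z ∧ z ⋖ x := by
  classical
  set T : Finset P := (lowF hfin x).filter (fun z => y ≤ z) with hT
  have hyT : y ∈ T := by simp [hT, mem_lowF, h]
  obtain ⟨m, hm, hmax⟩ : ∃ m ∈ T, ∀ x ∈ T, ¬ m < x := by
    obtain ⟨m, hm1, hm2⟩ := Finset.exists_maximal ⟨y, hyT⟩
    exact ⟨m, hm1, fun x hx hlt => not_le_of_gt hlt (hm2 hx hlt.le)⟩
  simp only [hT, Finset.mem_filter, mem_lowF] at hm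
  refine ⟨m, hm.2, hm.1, ?_⟩
  intro w hmw hwx
  exact hmax w (by simp [hT, Finset.mem_filter, mem_lowF, hwx, hm.2.trans hmw.le]) hmw

lemma rk_covby (hfin : Finitary P) (hucm : UCM P) :
    ∀ b a : P, a ⋖ b → rk hfin b = rk hfin a + 1 := by
  intro b
  refine hfin.wf.induction (C := fun b => ∀ a, a ⋖ b → rk hfin b = rk hfin a + 1) b ?_
  intro b ih a hab
  obtain ⟨y, hy, heq⟩ := rk_attained hfin hab.lt
  obtain ⟨a', hya', ha'⟩ := exists_covby hfin hy
  have heq' : rk hfin b = rk hfin a' + 1 := by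
    have h1 : rk hfin a' < rk hfin b := rk_lt hfin ha'.lt
    have h2 : rk hfin y ≤ rk hfin a' := by
      rcases eq_or_lt_of_le hya' with h | h
      · rw [h]
      · exact (rk_lt hfin h).le
    omega
  by_cases haa : a = a'
  · rw [haa]; exact heq'
  · obtain ⟨⟨c, ⟨hc1, hc2⟩, _⟩, _⟩ := hucm a a' haa (Or.inr ⟨b, hab, ha'⟩)
    have r1 : rk hfin a = rk hfin c + 1 := ih a hab.lt c hc1
    have r2 : rk hfin a' = rk hfin c + 1 := ih a' ha'.lt c hc2
    omega

end Aux

/-- The set of siblings of any point is an antichain. -/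
theorem stmt12 {P : Type*} [PartialOrder P]
    (hfin : Finitary P) (hucm : UCM P)
    (w : P → ℤ) (hw : ∀ x : P, 0 < w x)
    (r : ℤ) (hdiff : IdealDiff w r) :
    ∀ p : P, ∀ x ∈ Sset p, ∀ y ∈ Sset p, x ≠ y → ¬(x ≤ y ∨ y ≤ x) := by
  intro p x hx y hy hxy hle
  have key : ∀ z ∈ Sset p, rk hfin z = rk hfin p := by
    rintro z ⟨hz, a, b, hap, hpb, haz, hzb⟩
    have h1 := rk_covby hfin hucm p a hap
    have h2 := rk_covby hfin hucm b p hpb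
    have h3 := rk_lt hfin haz
    have h4 := rk_lt hfin hzb
    have h5 := rk_lt hfin hap.lt
    have h6 := rk_lt hfin hpb.lt
    omega
  have kx := key x hx
  have ky := key y hy
  rcases hle with h | h
  · have := rk_lt hfin (lt_of_le_of_ne h hxy)
    omega
  · have := rk_lt hfin (lt_of_le_of_ne h (Ne.symm hxy))
    omega
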